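/- Let OH be the octahedral graph: the complete tripartite graph on six vertices, with vertex set {1,2,3} × {0,1} and two vertices (i,a), (j,b) adjacent if and only if i ≠ j. Then for every nonnegative integer n, 160·W(OH)(n) = 6n⁶ + 54n⁵ + 210n⁴ + 450n³ + 559n² + 381n + 115 + (−1)^n·(10n³ + 45n² + 75n + 45). -/

import Mathlib

/-- `WG G n` is the number of weightings `α : V → {0,…,n}` of the simple graph `G`
such that `α u + α v ≤ n` for every edge `uv`. -/
noncomputable def WG {V : Type*} [Fintype V] (G : SimpleGraph V) (n : ℕ) : ℕ :=
  Nat.card {α : V → ℕ // (∀ v, α v ≤ n) ∧ ∀ u v, G.Adj u v → α u + α v ≤ n}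

/-- The octahedral graph: vertices are pairs in `{1,2,3} × {0,1}`, and `(i,a)` is
adjacent to `(j,b)` iff `i ≠ j` (the complete tripartite graph on three pairs). -/
def octahedralGraph : SimpleGraph (Fin 3 × Fin 2) where
  Adj u v := u.1 ≠ v.1
  symm := ⟨fun _ _ h => h.symm⟩
  loopless := ⟨fun _ h => h rfl⟩

namespace Octa
open Finset

lemma adj_iff (u v : Fin 3 × Fin 2) : octahedralGraph.Adj u v ↔ u.1 ≠ v.1 := Iff.rfl


lemma sum_max (N : ℕ) (g : ℕ → ℕ) :
    ∑ a ∈ range N, ∑ b ∈ range N, g (max a b) = ∑ m ∈ range N, (2*m+1) * g m := by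
  induction N with
  | zero => simp
  | succ N ih =>
    rw [Finset.sum_range_succ]
    have row : ∀ a ∈ range N, ∑ b ∈ range (N+1), g (max a b)
        = (∑ b ∈ range N, g (max a b)) + g N := by
      intro a ha
      rw [Finset.sum_range_succ]
      congr 2
      exact max_eq_right (le_of_lt (mem_range.mp ha))
    have last : ∑ b ∈ range (N+1), g (max N b) = N * g N + g N := by
      rw [Finset.sum_range_succ, max_self]
      congr 1
      have : ∀ b ∈ range N, g (max N b) = g N := fun b hb => by
        rw [max_eq_left (le_of_lt (mem_range.mp hb))]
      rw [Finset.sum_congr rfl this, Finset.sum_const, Finset.card_range, smul_eq_mul]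
    rw [Finset.sum_congr rfl row, Finset.sum_add_distrib, ih, Finset.sum_const, Finset.card_range,
      last, Finset.sum_range_succ, smul_eq_mul]
    ring

lemma sum_max3 (N : ℕ) (F : ℕ → ℕ → ℕ → ℕ) :
    ∑ a1 ∈ range N, ∑ b1 ∈ range N, ∑ a2 ∈ range N, ∑ b2 ∈ range N, ∑ a3 ∈ range N, ∑ b3 ∈ range N,
        F (max a1 b1) (max a2 b2) (max a3 b3)
      = ∑ m1 ∈ range N, (2*m1+1) * ∑ m2 ∈ range N, (2*m2+1) * ∑ m3 ∈ range N, (2*m3+1) * F m1 m2 m3 := by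
  have stepA : ∀ x y : ℕ,
      ∑ a3 ∈ range N, ∑ b3 ∈ range N, F x y (max a3 b3) = ∑ m3 ∈ range N, (2*m3+1) * F x y m3 :=
    fun x y => sum_max N _
  have stepB : ∀ x : ℕ,
      ∑ a2 ∈ range N, ∑ b2 ∈ range N, ∑ m3 ∈ range N, (2*m3+1) * F x (max a2 b2) m3
        = ∑ m2 ∈ range N, (2*m2+1) * ∑ m3 ∈ range N, (2*m3+1) * F x m2 m3 :=
    fun x => sum_max N (fun m => ∑ m3 ∈ range N, (2*m3+1) * F x m m3)
  calc
    _ = ∑ a1 ∈ range N, ∑ b1 ∈ range N, ∑ a2 ∈ range N, ∑ b2 ∈ range N,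
          ∑ m3 ∈ range N, (2*m3+1) * F (max a1 b1) (max a2 b2) m3 := by
      refine Finset.sum_congr rfl fun a1 _ => Finset.sum_congr rfl fun b1 _ =>
        Finset.sum_congr rfl fun a2 _ => Finset.sum_congr rfl fun b2 _ => stepA _ _
    _ = ∑ a1 ∈ range N, ∑ b1 ∈ range N,
          ∑ m2 ∈ range N, (2*m2+1) * ∑ m3 ∈ range N, (2*m3+1) * F (max a1 b1) m2 m3 := by
      refine Finset.sum_congr rfl fun a1 _ => Finset.sum_congr rfl fun b1 _ => stepB _
    _ = _ := sum_max N (fun m => ∑ m2 ∈ range N, (2*m2+1) * ∑ m3 ∈ range N, (2*m3+1) * F m m2 m3)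

lemma fin6 (N : ℕ) (F : ℕ→ℕ→ℕ→ℕ→ℕ→ℕ→ℕ) :
    ∑ a : Fin N, ∑ b : Fin N, ∑ c : Fin N, ∑ d : Fin N, ∑ e : Fin N, ∑ f : Fin N,
        F ↑a ↑b ↑c ↑d ↑e ↑f
      = ∑ a ∈ range N, ∑ b ∈ range N, ∑ c ∈ range N, ∑ d ∈ range N, ∑ e ∈ range N, ∑ f ∈ range N,
        F a b c d e f := by
  have L : ∀ (g : ℕ → ℕ), ∑ i : Fin N, g ↑i = ∑ i ∈ range N, g i :=
    fun g => Fin.sum_univ_eq_sum_range g N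
  calc
    _ = ∑ a : Fin N, ∑ b : Fin N, ∑ c : Fin N, ∑ d : Fin N, ∑ e : Fin N, ∑ f ∈ range N,
          F ↑a ↑b ↑c ↑d ↑e f := by
      refine Finset.sum_congr rfl fun a _ => Finset.sum_congr rfl fun b _ =>
        Finset.sum_congr rfl fun c _ => Finset.sum_congr rfl fun d _ =>
        Finset.sum_congr rfl fun e _ => L _
    _ = ∑ a : Fin N, ∑ b : Fin N, ∑ c : Fin N, ∑ d : Fin N, ∑ e ∈ range N, ∑ f ∈ range N,
          F ↑a ↑b ↑c ↑d e f := by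
      refine Finset.sum_congr rfl fun a _ => Finset.sum_congr rfl fun b _ =>
        Finset.sum_congr rfl fun c _ => Finset.sum_congr rfl fun d _ =>
        L (fun e => ∑ f ∈ range N, F ↑a ↑b ↑c ↑d e f)
    _ = ∑ a : Fin N, ∑ b : Fin N, ∑ c : Fin N, ∑ d ∈ range N, ∑ e ∈ range N, ∑ f ∈ range N,
          F ↑a ↑b ↑c d e f := by
      refine Finset.sum_congr rfl fun a _ => Finset.sum_congr rfl fun b _ =>
        Finset.sum_congr rfl fun c _ =>
        L (fun d => ∑ e ∈ range N, ∑ f ∈ range N, F ↑a ↑b ↑c d e f)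
    _ = ∑ a : Fin N, ∑ b : Fin N, ∑ c ∈ range N, ∑ d ∈ range N, ∑ e ∈ range N, ∑ f ∈ range N,
          F ↑a ↑b c d e f := by
      refine Finset.sum_congr rfl fun a _ => Finset.sum_congr rfl fun b _ =>
        L (fun c => ∑ d ∈ range N, ∑ e ∈ range N, ∑ f ∈ range N, F ↑a ↑b c d e f)
    _ = ∑ a : Fin N, ∑ b ∈ range N, ∑ c ∈ range N, ∑ d ∈ range N, ∑ e ∈ range N, ∑ f ∈ range N,
          F ↑a b c d e f := by
      refine Finset.sum_congr rfl fun a _ =>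
        L (fun b => ∑ c ∈ range N, ∑ d ∈ range N, ∑ e ∈ range N, ∑ f ∈ range N, F ↑a b c d e f)
    _ = _ := L (fun a => ∑ b ∈ range N, ∑ c ∈ range N, ∑ d ∈ range N, ∑ e ∈ range N, ∑ f ∈ range N, F a b c d e f)
section
variable (n : ℕ)

abbrev X := Fin (n+1)

def Q (p : (X n × X n) × (X n × X n) × (X n × X n)) : Prop :=
  ((p.1.1 : ℕ) + p.2.1.1 ≤ n ∧ (p.1.1 : ℕ) + p.2.1.2 ≤ n ∧ (p.1.2 : ℕ) + p.2.1.1 ≤ n ∧ (p.1.2 : ℕ) + p.2.1.2 ≤ n) ∧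
  ((p.1.1 : ℕ) + p.2.2.1 ≤ n ∧ (p.1.1 : ℕ) + p.2.2.2 ≤ n ∧ (p.1.2 : ℕ) + p.2.2.1 ≤ n ∧ (p.1.2 : ℕ) + p.2.2.2 ≤ n) ∧
  ((p.2.1.1 : ℕ) + p.2.2.1 ≤ n ∧ (p.2.1.1 : ℕ) + p.2.2.2 ≤ n ∧ (p.2.1.2 : ℕ) + p.2.2.1 ≤ n ∧ (p.2.1.2 : ℕ) + p.2.2.2 ≤ n)

instance : DecidablePred (Q n) := fun _ => by unfold Q; infer_instance

def tupEquiv : ((Fin 3 × Fin 2) → X n) ≃ ((X n × X n) × (X n × X n) × (X n × X n)) where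
  toFun α := ((α (0,0), α (0,1)), (α (1,0), α (1,1)), (α (2,0), α (2,1)))
  invFun p v := ![![p.1.1, p.1.2], ![p.2.1.1, p.2.1.2], ![p.2.2.1, p.2.2.2]] v.1 v.2
  left_inv α := by funext v; obtain ⟨i,a⟩ := v; fin_cases i <;> fin_cases a <;> rfl
  right_inv p := rfl

lemma P_iff (α : (Fin 3 × Fin 2) → X n) :
    (∀ u v, octahedralGraph.Adj u v → (α u : ℕ) + (α v : ℕ) ≤ n) ↔ Q n (tupEquiv n α) := by
  simp only [Q, tupEquiv, Equiv.coe_fn_mk]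
  constructor
  · intro h
    refine ⟨⟨?_,?_,?_,?_⟩,⟨?_,?_,?_,?_⟩,⟨?_,?_,?_,?_⟩⟩ <;>
      exact h _ _ (by rw [adj_iff]; decide)
  · rintro ⟨⟨h1,h2,h3,h4⟩,⟨h5,h6,h7,h8⟩,⟨h9,h10,h11,h12⟩⟩ u v hadj
    rw [adj_iff] at hadj
    fin_cases u <;> fin_cases v <;> dsimp [DFunLike.coe, EquivLike.coe] at * <;> omega

lemma WG_eq_filter :
    WG octahedralGraph n = (Finset.univ.filter (Q n)).card := by
  unfold WG
  have e1 : {α : Fin 3 × Fin 2 → ℕ // (∀ v, α v ≤ n) ∧ ∀ u v, octahedralGraph.Adj u v → α u + α v ≤ n}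
      ≃ {α : (Fin 3 × Fin 2) → X n // ∀ u v, octahedralGraph.Adj u v → (α u : ℕ) + (α v : ℕ) ≤ n} :=
  { toFun := fun a => ⟨fun v => ⟨a.1 v, Nat.lt_succ_of_le (a.2.1 v)⟩, a.2.2⟩
    invFun := fun b => ⟨fun v => (b.1 v : ℕ), ⟨fun v => Nat.lt_succ_iff.mp (b.1 v).2, b.2⟩⟩
    left_inv := fun a => rfl
    right_inv := fun b => rfl }
  rw [Nat.card_congr (e1.trans ((tupEquiv n).subtypeEquiv (P_iff n))),
    Nat.card_eq_fintype_card, Fintype.card_subtype]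

def C3 : ℕ :=
  ∑ m1 ∈ range (n+1), (2*m1+1) * ∑ m2 ∈ range (n+1), (2*m2+1) * ∑ m3 ∈ range (n+1), (2*m3+1) *
    (if m1+m2 ≤ n ∧ m1+m3 ≤ n ∧ m2+m3 ≤ n then 1 else 0)

lemma WG_eq_C3 : WG octahedralGraph n = C3 n := by
  rw [WG_eq_filter, Finset.card_filter]
  simp only [Fintype.sum_prod_type]
  have key : ∀ a1 b1 a2 b2 a3 b3 : Fin (n+1),
      (if Q n ((a1,b1),(a2,b2),(a3,b3)) then 1 else 0)
        = (fun x y z : ℕ => if x+y ≤ n ∧ x+z ≤ n ∧ y+z ≤ n then 1 else 0)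
            (max (a1:ℕ) (b1:ℕ)) (max (a2:ℕ) (b2:ℕ)) (max (a3:ℕ) (b3:ℕ)) := by
    intro a1 b1 a2 b2 a3 b3
    simp only [Q]
    refine if_congr ?_ rfl rfl
    omega
  simp only [key]
  rw [fin6 (n+1) (fun x y z w u v =>
    if x ⊔ y + (z ⊔ w) ≤ n ∧ x ⊔ y + (u ⊔ v) ≤ n ∧ z ⊔ w + (u ⊔ v) ≤ n then 1 else 0)]
  exact sum_max3 (n+1) (fun m1 m2 m3 => if m1+m2 ≤ n ∧ m1+m3 ≤ n ∧ m2+m3 ≤ n then 1 else 0)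

end

def Q2 (c : ℤ) (K : ℕ) : ℤ := ∑ m ∈ range K, (2*(m:ℤ)+1) * (c - m)^2
def R4 (c : ℤ) (K : ℕ) : ℤ := ∑ m ∈ range K, (2*(m:ℤ)+1) * (c - m)^4
def P1 (n K : ℕ) : ℤ := ∑ m ∈ range K,
  (2*(m:ℤ)+1) * (((m:ℤ)+1)^2*((n:ℤ)+1-(m:ℤ))^2 + (Q2 ((n:ℤ)+1) (n+1-m) - Q2 ((n:ℤ)+1) (m+1)))

lemma sum_f_int (K : ℕ) : ∑ m ∈ range K, (2*(m:ℤ)+1) = (K:ℤ)^2 := by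
  induction K with
  | zero => simp
  | succ K ih => rw [Finset.sum_range_succ, ih]; push_cast; ring

lemma sum_ite_lt (N t : ℕ) (h : t ≤ N) (f : ℕ → ℤ) :
    ∑ m ∈ range N, (if m < t then f m else 0) = ∑ m ∈ range t, f m := by
  rw [← Finset.sum_filter]
  congr 1
  ext m
  simp only [Finset.mem_filter, Finset.mem_range]
  omega

lemma Q2_closed (c : ℤ) (K : ℕ) : 6 * Q2 c K
    = (K:ℤ) - 4*(K:ℤ)^3 + 3*(K:ℤ)^4 + 2*c*(K:ℤ) + 6*c*(K:ℤ)^2 - 8*c*(K:ℤ)^3 + 6*c^2*(K:ℤ)^2 := by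
  induction K with
  | zero => simp [Q2]
  | succ K ih =>
    rw [Q2, Finset.sum_range_succ, ← Q2, mul_add, ih]
    push_cast; ring

lemma R4_closed (c : ℤ) (K : ℕ) : 30 * R4 c K
    = -(K:ℤ) - 5*(K:ℤ)^2 + 10*(K:ℤ)^3 + 10*(K:ℤ)^4 - 24*(K:ℤ)^5 + 10*(K:ℤ)^6
      + c*(8*(K:ℤ) - 30*(K:ℤ)^2 - 20*(K:ℤ)^3 + 90*(K:ℤ)^4 - 48*(K:ℤ)^5)
      + c^2*(30*(K:ℤ) - 120*(K:ℤ)^3 + 90*(K:ℤ)^4)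
      + c^3*(20*(K:ℤ) + 60*(K:ℤ)^2 - 80*(K:ℤ)^3)
      + c^4*(30*(K:ℤ)^2) := by
  induction K with
  | zero => simp [R4]
  | succ K ih =>
    rw [R4, Finset.sum_range_succ, ← R4, mul_add, ih]
    push_cast; ring

lemma P1_closed (n K : ℕ) (h : K ≤ n/2 + 1) : 30 * P1 n K
    = -6*(K:ℤ) + 40*(K:ℤ)^2 + 30*(K:ℤ)^3 - 20*(K:ℤ)^4 - 24*(K:ℤ)^5 + 10*(K:ℤ)^6
      + (n:ℤ)*(-4*(K:ℤ) + 75*(K:ℤ)^2 + 20*(K:ℤ)^3 - 16*(K:ℤ)^5)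
      + (n:ℤ)^2*70*(K:ℤ)^2 + (n:ℤ)^3*30*(K:ℤ)^2 + (n:ℤ)^4*5*(K:ℤ)^2 := by
  induction K with
  | zero => simp [P1]
  | succ K ih =>
    have hK : 2*K ≤ n := by omega
    have q1 := Q2_closed ((n:ℤ)+1) (n+1-K)
    have q2 := Q2_closed ((n:ℤ)+1) (K+1)
    have hc : ((n+1-K : ℕ) : ℤ) = (n:ℤ)+1-(K:ℤ) := by omega
    rw [hc] at q1
    rw [P1, Finset.sum_range_succ, ← P1, mul_add, ih (by omega)]
    push_cast at q1 q2 ⊢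
    linear_combination 5*(2*(K:ℤ)+1)*q1 - 5*(2*(K:ℤ)+1)*q2


lemma inner3 (n m1 m2 : ℕ) (h1 : m1 ≤ n) (h2 : m2 ≤ n) :
    ∑ m3 ∈ range (n+1), (2*(m3:ℤ)+1) * (if m1+m2 ≤ n ∧ m1+m3 ≤ n ∧ m2+m3 ≤ n then 1 else 0)
      = (if m1+m2 ≤ n then ((n:ℤ)+1-((max m1 m2 : ℕ) : ℤ))^2 else 0) := by
  by_cases h12 : m1+m2 ≤ n
  · rw [if_pos h12]
    have e : ∀ m3 ∈ range (n+1),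
        (2*(m3:ℤ)+1) * (if m1+m2 ≤ n ∧ m1+m3 ≤ n ∧ m2+m3 ≤ n then 1 else 0)
          = (if m3 < n+1 - max m1 m2 then (2*(m3:ℤ)+1) else 0) := by
      intro m3 _
      split_ifs <;> first | ring1 | (exfalso; omega)
    rw [Finset.sum_congr rfl e, sum_ite_lt _ _ (by omega), sum_f_int]
    have hc : ((n+1-max m1 m2 : ℕ) : ℤ) = (n:ℤ)+1-((max m1 m2 : ℕ) : ℤ) := by omega
    rw [hc]
  · rw [if_neg h12]
    apply Finset.sum_eq_zero
    intro m3 _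
    rw [if_neg (fun hc => h12 hc.1), mul_zero]

lemma inner2 (n m1 : ℕ) (h1 : m1 ≤ n) :
    ∑ m2 ∈ range (n+1), (2*(m2:ℤ)+1) * (if m1+m2 ≤ n then ((n:ℤ)+1-((max m1 m2 : ℕ) : ℤ))^2 else 0)
      = if 2*m1 ≤ n
          then ((m1:ℤ)+1)^2*((n:ℤ)+1-(m1:ℤ))^2 + (Q2 ((n:ℤ)+1) (n+1-m1) - Q2 ((n:ℤ)+1) (m1+1))
          else ((n:ℤ)+1-(m1:ℤ))^4 := by
  rw [Finset.range_eq_Ico, ← Finset.sum_Ico_consecutive _ (Nat.zero_le (m1+1)) (by omega : m1+1 ≤ n+1)]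
  by_cases h : 2*m1 ≤ n
  · rw [if_pos h]
    have hA : ∑ m2 ∈ Ico 0 (m1+1), (2*(m2:ℤ)+1) * (if m1+m2 ≤ n then ((n:ℤ)+1-((max m1 m2 : ℕ) : ℤ))^2 else 0)
        = ((m1:ℤ)+1)^2*((n:ℤ)+1-(m1:ℤ))^2 := by
      rw [← Finset.range_eq_Ico]
      have e : ∀ m2 ∈ range (m1+1),
          (2*(m2:ℤ)+1) * (if m1+m2 ≤ n then ((n:ℤ)+1-((max m1 m2 : ℕ) : ℤ))^2 else 0)
            = (2*(m2:ℤ)+1) * ((n:ℤ)+1-(m1:ℤ))^2 := by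
        intro m2 hm2
        rw [Finset.mem_range] at hm2
        rw [if_pos (by omega), max_eq_left (by omega)]
      rw [Finset.sum_congr rfl e, ← Finset.sum_mul, sum_f_int]
      push_cast
      ring
    have hB : ∑ m2 ∈ Ico (m1+1) (n+1), (2*(m2:ℤ)+1) * (if m1+m2 ≤ n then ((n:ℤ)+1-((max m1 m2 : ℕ) : ℤ))^2 else 0)
        = Q2 ((n:ℤ)+1) (n+1-m1) - Q2 ((n:ℤ)+1) (m1+1) := by
      have e : ∀ m2 ∈ Ico (m1+1) (n+1),
          (2*(m2:ℤ)+1) * (if m1+m2 ≤ n then ((n:ℤ)+1-((max m1 m2 : ℕ) : ℤ))^2 else 0)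
            = (if m2 < n+1-m1 then (2*(m2:ℤ)+1) * ((n:ℤ)+1-(m2:ℤ))^2 else 0) := by
        intro m2 hm2
        rw [Finset.mem_Ico] at hm2
        rw [max_eq_right (by omega)]
        split_ifs <;> first | ring1 | (exfalso; omega)
      rw [Finset.sum_congr rfl e, Finset.sum_Ico_eq_sub _ (by omega : m1+1 ≤ n+1)]
      congr 1
      · rw [sum_ite_lt _ _ (by omega), Q2]
      · rw [Q2]
        apply Finset.sum_congr rfl
        intro m2 hm2
        rw [Finset.mem_range] at hm2
        rw [if_pos (by omega)]
    rw [hA, hB]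
  · rw [if_neg h]
    have hA : ∑ m2 ∈ Ico 0 (m1+1), (2*(m2:ℤ)+1) * (if m1+m2 ≤ n then ((n:ℤ)+1-((max m1 m2 : ℕ) : ℤ))^2 else 0)
        = ((n:ℤ)+1-(m1:ℤ))^4 := by
      rw [← Finset.range_eq_Ico]
      have e : ∀ m2 ∈ range (m1+1),
          (2*(m2:ℤ)+1) * (if m1+m2 ≤ n then ((n:ℤ)+1-((max m1 m2 : ℕ) : ℤ))^2 else 0)
            = (if m2 < n+1-m1 then (2*(m2:ℤ)+1) * ((n:ℤ)+1-(m1:ℤ))^2 else 0) := by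
        intro m2 hm2
        rw [Finset.mem_range] at hm2
        rw [max_eq_left (by omega)]
        split_ifs <;> first | ring1 | (exfalso; omega)
      rw [Finset.sum_congr rfl e, sum_ite_lt _ _ (by omega), ← Finset.sum_mul, sum_f_int]
      have hc : ((n+1-m1 : ℕ) : ℤ) = (n:ℤ)+1-(m1:ℤ) := by omega
      rw [hc]; ring
    have hB : ∑ m2 ∈ Ico (m1+1) (n+1), (2*(m2:ℤ)+1) * (if m1+m2 ≤ n then ((n:ℤ)+1-((max m1 m2 : ℕ) : ℤ))^2 else 0)
        = 0 := by
      apply Finset.sum_eq_zero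
      intro m2 hm2
      rw [Finset.mem_Ico] at hm2
      rw [if_neg (by omega), mul_zero]
    rw [hA, hB, add_zero]

lemma C3_eq (n : ℕ) : (C3 n : ℤ) = P1 n (n/2+1) + (R4 ((n:ℤ)+1) (n+1) - R4 ((n:ℤ)+1) (n/2+1)) := by
  have step1 : (C3 n : ℤ) = ∑ m1 ∈ range (n+1), (2*(m1:ℤ)+1) *
      (if 2*m1 ≤ n
        then ((m1:ℤ)+1)^2*((n:ℤ)+1-(m1:ℤ))^2 + (Q2 ((n:ℤ)+1) (n+1-m1) - Q2 ((n:ℤ)+1) (m1+1))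
        else ((n:ℤ)+1-(m1:ℤ))^4) := by
    rw [C3]
    push_cast
    refine Finset.sum_congr rfl fun m1 hm1 => ?_
    rw [Finset.mem_range] at hm1
    rw [← inner2 n m1 (by omega)]
    congr 1
    refine Finset.sum_congr rfl fun m2 hm2 => ?_
    rw [Finset.mem_range] at hm2
    rw [← inner3 n m1 m2 (by omega) (by omega)]
  rw [step1, Finset.range_eq_Ico,
    ← Finset.sum_Ico_consecutive _ (Nat.zero_le (n/2+1)) (by omega : n/2+1 ≤ n+1)]
  congr 1
  · rw [← Finset.range_eq_Ico, P1]
    refine Finset.sum_congr rfl fun m hm => ?_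
    rw [Finset.mem_range] at hm
    rw [if_pos (by omega)]
  · have e : ∀ m ∈ Ico (n/2+1) (n+1),
        (2*(m:ℤ)+1) * (if 2*m ≤ n
          then ((m:ℤ)+1)^2*((n:ℤ)+1-(m:ℤ))^2 + (Q2 ((n:ℤ)+1) (n+1-m) - Q2 ((n:ℤ)+1) (m+1))
          else ((n:ℤ)+1-(m:ℤ))^4)
          = (2*(m:ℤ)+1) * ((n:ℤ)+1-(m:ℤ))^4 := by
      intro m hm
      rw [Finset.mem_Ico] at hm
      rw [if_neg (by omega)]
    rw [Finset.sum_congr rfl e, Finset.sum_Ico_eq_sub _ (by omega : n/2+1 ≤ n+1), R4, R4]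

lemma final (n : ℕ) : (160 * C3 n : ℤ)
    = 6 * n ^ 6 + 54 * n ^ 5 + 210 * n ^ 4 + 450 * n ^ 3 + 559 * n ^ 2 + 381 * n + 115
      + (-1) ^ n * (10 * n ^ 3 + 45 * n ^ 2 + 75 * n + 45) := by
  have hC := C3_eq n
  have hP := P1_closed n (n/2+1) le_rfl
  have hR1 := R4_closed ((n:ℤ)+1) (n+1)
  have hR2 := R4_closed ((n:ℤ)+1) (n/2+1)
  apply mul_left_cancel₀ (show (3:ℤ) ≠ 0 by norm_num)
  rcases Nat.even_or_odd n with ⟨k,hk⟩ | ⟨k,hk⟩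
  · subst hk
    have h2 : (k+k)/2+1 = k+1 := by omega
    rw [h2] at hC hP hR2
    have hneg : (-1:ℤ)^(k+k) = 1 := Even.neg_one_pow ⟨k, rfl⟩
    rw [hneg]
    push_cast at hC hP hR1 hR2 ⊢
    linear_combination 480*hC + 16*hP + 16*hR1 - 16*hR2
  · subst hk
    have h2 : (2*k+1)/2+1 = k+1 := by omega
    rw [h2] at hC hP hR2
    have hneg : (-1:ℤ)^(2*k+1) = -1 := Odd.neg_one_pow ⟨k, by ring⟩
    rw [hneg]
    push_cast at hC hP hR1 hR2 ⊢
    linear_combination 480*hC + 16*hP + 16*hR1 - 16*hR2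

end Octa

theorem octahedral_weightings (n : ℕ) :
    (160 * WG octahedralGraph n : ℤ)
      = 6 * n ^ 6 + 54 * n ^ 5 + 210 * n ^ 4 + 450 * n ^ 3 + 559 * n ^ 2 + 381 * n + 115
        + (-1) ^ n * (10 * n ^ 3 + 45 * n ^ 2 + 75 * n + 45) := by
  have hW : ((WG octahedralGraph n : ℕ) : ℤ) = ((Octa.C3 n : ℕ) : ℤ) := by
    exact_mod_cast congrArg (Nat.cast : ℕ → ℤ) (Octa.WG_eq_C3 n)
  rw [hW]
  exact Octa.final n
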